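/- Let f : ℝⁿ → ℝ be L-smooth and μ-strongly convex with L ≥ μ > 0, and let η = 1/L. Consider two inexact gradient descent sequences x_{t+1} = x_t − η(∇f(x_t) + Δ_t) and x'_{t+1} = x'_t − η(∇f(x'_t) + Δ'_t) with x_0 = x'_0 and ‖Δ_t‖, ‖Δ'_t‖ ≤ δ for all t. Then for all t ≥ 1, ‖x_t − x'_t‖ ≤ 4δ/μ. -/

import Mathlib

open scoped RealInnerProductSpace

section Aux

variable {E : Type*} [NormedAddCommGroup E] [InnerProductSpace ℝ E] [CompleteSpace E]

/-- directional derivative along a segment -/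
private lemma line_hasDerivAt (f : E → ℝ) (G : E → E)
    (hG : ∀ p, HasGradientAt f (G p) p) (x y : E) (t : ℝ) :
    HasDerivAt (fun s : ℝ => f (x + s • (y - x))) ⟪G (x + t • (y - x)), y - x⟫ t := by
  have hline : HasDerivAt (fun s : ℝ => x + s • (y - x)) (y - x) t := by
    simpa using ((hasDerivAt_id t).smul_const (y - x)).const_add x
  have hfd : HasFDerivAt f (InnerProductSpace.toDual ℝ E (G (x + t • (y - x))))
      (x + t • (y - x)) := by
    have := hG (x + t • (y - x))
    rwa [hasGradientAt_iff_hasFDerivAt] at this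
  have h := hfd.comp_hasDerivAt t hline
  simp only [InnerProductSpace.toDual_apply_apply] at h
  exact h

/-- first-order lower bound for a convex differentiable function -/
private lemma convexLower (f : E → ℝ) (G : E → E)
    (hG : ∀ p, HasGradientAt f (G p) p) (hconv : ConvexOn ℝ Set.univ f)
    (x y : E) : f x + ⟪G x, y - x⟫ ≤ f y := by
  set φ : ℝ → ℝ := fun s => f (x + s • (y - x)) with hφ
  have hφconv : ConvexOn ℝ Set.univ φ := by
    have := hconv.comp_affineMap (AffineMap.lineMap x y : ℝ →ᵃ[ℝ] E)
    have he : (f ∘ (AffineMap.lineMap x y : ℝ →ᵃ[ℝ] E)) = φ := by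
      funext s
      simp [hφ, AffineMap.lineMap_apply, add_comm]
    rw [he] at this
    simpa using this
  have hd : HasDerivAt φ ⟪G x, y - x⟫ 0 := by
    simpa using line_hasDerivAt f G hG x y 0
  have hs := ConvexOn.le_slope_of_hasDerivAt (S := Set.univ) hφconv (Set.mem_univ 0)
    (Set.mem_univ 1) one_pos hd
  have hslope : slope φ 0 1 = f y - f x := by
    simp [slope_def_field, hφ]
  rw [hslope] at hs
  linarith

/-- descent lemma for L-smooth functions -/
private lemma descentLemma (f : E → ℝ) (G : E → E)
    (hG : ∀ p, HasGradientAt f (G p) p) {L : ℝ} (hL : 0 < L)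
    (hlip : ∀ u v, ‖G u - G v‖ ≤ L * ‖u - v‖) (x y : E) :
    f y ≤ f x + ⟪G x, y - x⟫ + L / 2 * ‖y - x‖ ^ 2 := by
  have hGc : Continuous G := by
    have : LipschitzWith L.toNNReal G := by
      apply LipschitzWith.of_dist_le_mul
      intro u v
      simpa [dist_eq_norm, Real.coe_toNNReal L hL.le] using hlip u v
    exact this.continuous
  set ψ : ℝ → ℝ := fun t => ⟪G (x + t • (y - x)), y - x⟫ with hψ
  have hψc : Continuous ψ := by
    apply Continuous.inner
    · exact hGc.comp (by continuity)
    · exact continuous_const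
  have hint : IntervalIntegrable ψ MeasureTheory.volume 0 1 :=
    hψc.intervalIntegrable 0 1
  have hftc : ∫ t in (0:ℝ)..1, ψ t = f y - f x := by
    have := intervalIntegral.integral_eq_sub_of_hasDerivAt
      (f := fun s : ℝ => f (x + s • (y - x))) (f' := ψ)
      (fun t _ => line_hasDerivAt f G hG x y t) hint
    simpa using this
  have hbound : ∀ t ∈ Set.Icc (0:ℝ) 1,
      ψ t ≤ ⟪G x, y - x⟫ + L * t * ‖y - x‖ ^ 2 := by
    intro t ht
    have h1 : ψ t - ⟪G x, y - x⟫ = ⟪G (x + t • (y - x)) - G x, y - x⟫ := by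
      simp [hψ, inner_sub_left]
    have h2 : ⟪G (x + t • (y - x)) - G x, y - x⟫ ≤ L * t * ‖y - x‖ ^ 2 := by
      calc ⟪G (x + t • (y - x)) - G x, y - x⟫
          ≤ ‖G (x + t • (y - x)) - G x‖ * ‖y - x‖ := real_inner_le_norm _ _
        _ ≤ (L * ‖(x + t • (y - x)) - x‖) * ‖y - x‖ := by
            gcongr; exact hlip _ _
        _ = L * t * ‖y - x‖ ^ 2 := by
            have : ‖(x + t • (y - x)) - x‖ = t * ‖y - x‖ := by
              simp [norm_smul, abs_of_nonneg ht.1]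
            rw [this]; ring
    linarith
  have hmono : ∫ t in (0:ℝ)..1, ψ t ≤
      ∫ t in (0:ℝ)..1, (⟪G x, y - x⟫ + L * t * ‖y - x‖ ^ 2) := by
    apply intervalIntegral.integral_mono_on (by norm_num) hint
    · apply Continuous.intervalIntegrable
      continuity
    · exact hbound
  have hrhs : ∫ t in (0:ℝ)..1, (⟪G x, y - x⟫ + L * t * ‖y - x‖ ^ 2)
      = ⟪G x, y - x⟫ + L / 2 * ‖y - x‖ ^ 2 := by
    rw [intervalIntegral.integral_add (by apply Continuous.intervalIntegrable; continuity)
      (by apply Continuous.intervalIntegrable; continuity)]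
    have : ∫ t in (0:ℝ)..1, L * t * ‖y - x‖ ^ 2
        = (L * ‖y - x‖ ^ 2) * ∫ t in (0:ℝ)..1, t := by
      rw [← intervalIntegral.integral_const_mul]
      congr 1; funext t; ring
    rw [this, integral_id]
    simp; ring
  rw [hftc] at hmono
  rw [hrhs] at hmono
  linarith

/-- gradient of a function plus a linear functional -/
private lemma hasGradientAt_add_inner (f : E → ℝ) (G : E → E)
    (hG : ∀ p, HasGradientAt f (G p) p) (a : E) (p : E) :
    HasGradientAt (fun w => f w + ⟪a, w⟫) (G p + a) p := by
  have h1 : HasFDerivAt f (InnerProductSpace.toDual ℝ E (G p)) p := by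
    have := hG p; rwa [hasGradientAt_iff_hasFDerivAt] at this
  have h2 : HasFDerivAt (fun w : E => ⟪a, w⟫) (InnerProductSpace.toDual ℝ E a) p := by
    have : HasFDerivAt (fun w : E => (innerSL ℝ a) w) (innerSL ℝ a) p :=
      (innerSL ℝ a).hasFDerivAt
    apply this.congr_fderiv
    ext w
    simp [InnerProductSpace.toDual_apply_apply]
  have h3 := h1.add h2
  rw [hasGradientAt_iff_hasFDerivAt]
  apply h3.congr_fderiv
  ext w
  simp [InnerProductSpace.toDual_apply_apply, inner_add_left]

/-- cocoercivity of the gradient of a convex L-smooth function -/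
private lemma cocoercive (f : E → ℝ) (G : E → E)
    (hG : ∀ p, HasGradientAt f (G p) p) (hconv : ConvexOn ℝ Set.univ f)
    {L : ℝ} (hL : 0 < L)
    (hlip : ∀ u v, ‖G u - G v‖ ≤ L * ‖u - v‖) (x y : E) :
    (1 / L) * ‖G x - G y‖ ^ 2 ≤ ⟪G x - G y, x - y⟫ := by
  -- auxiliary: for any base point b, f x - ⟪G b, x⟫ minimized-ish
  have key : ∀ b z : E, f b - ⟪G b, b⟫ ≤ f z - ⟪G b, z⟫ - 1/(2*L) * ‖G z - G b‖ ^ 2 := by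
    intro b z
    set A : E → ℝ := fun w => f w + ⟪-(G b), w⟫ with hA
    set GA : E → E := fun w => G w + -(G b) with hGA
    have hGA' : ∀ p, HasGradientAt A (GA p) p := fun p =>
      hasGradientAt_add_inner f G hG (-(G b)) p
    have hAconv : ConvexOn ℝ Set.univ A := by
      apply hconv.add
      constructor
      · exact convex_univ
      · intro u _ v _ a c ha hc hac
        apply le_of_eq
        simp [inner_add_right, real_inner_smul_right]
    have hAlip : ∀ u v, ‖GA u - GA v‖ ≤ L * ‖u - v‖ := by
      intro u v
      have : GA u - GA v = G u - G v := by simp only [hGA]; abel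
      rw [this]; exact hlip u v
    -- A b ≤ A w for all w
    have hmin : ∀ w, A b ≤ A w := by
      intro w
      have := convexLower A GA hGA' hAconv b w
      have hz : GA b = 0 := by simp [hGA]
      rw [hz] at this
      simpa using this
    -- descent at w := z - (1/L) • GA z
    set w : E := z - (1/L) • GA z with hw
    have hdesc := descentLemma A GA hGA' hL hAlip z w
    have hwz : w - z = -((1/L) • GA z) := by rw [hw]; abel
    have hinner : ⟪GA z, w - z⟫ = -(1/L) * ‖GA z‖ ^ 2 := by
      rw [hwz]
      rw [inner_neg_right, real_inner_smul_right, real_inner_self_eq_norm_sq]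
      ring
    have hnorm : ‖w - z‖ ^ 2 = (1/L)^2 * ‖GA z‖ ^ 2 := by
      rw [hwz, norm_neg, norm_smul, Real.norm_eq_abs, abs_of_pos (by positivity : (0:ℝ) < 1/L)]
      ring
    have h4 : A b ≤ A z - 1/(2*L) * ‖GA z‖ ^ 2 := by
      have := hmin w
      rw [hinner, hnorm] at hdesc
      have hLne : L ≠ 0 := ne_of_gt hL
      calc A b ≤ A w := hmin w
        _ ≤ A z + (-(1/L) * ‖GA z‖ ^ 2) + L / 2 * ((1/L)^2 * ‖GA z‖ ^ 2) := hdesc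
        _ = A z - 1/(2*L) * ‖GA z‖ ^ 2 := by field_simp; ring
    have hAb : A b = f b - ⟪G b, b⟫ := by simp [hA, inner_neg_left]; ring
    have hAz : A z = f z - ⟪G b, z⟫ := by simp [hA, inner_neg_left]; ring
    have hGAz : GA z = G z - G b := by simp only [hGA]; abel
    rw [hAb, hAz, hGAz] at h4
    exact h4
  have k1 := key x y
  have k2 := key y x
  have hxy : ‖G y - G x‖ = ‖G x - G y‖ := by rw [← norm_neg]; congr 1; abel
  rw [hxy] at k1
  have hexp : ⟪G x - G y, x - y⟫
      = ⟪G x, x⟫ - ⟪G x, y⟫ - ⟪G y, x⟫ + ⟪G y, y⟫ := by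
    rw [inner_sub_left, inner_sub_right, inner_sub_right]; ring
  rw [hexp]
  have hhalf : 1/(2*L) * ‖G x - G y‖ ^ 2 + 1/(2*L) * ‖G x - G y‖ ^ 2
      = 1/L * ‖G x - G y‖ ^ 2 := by
    field_simp
    ring
  linarith [k1, k2]


/-- strong monotonicity of the gradient of a strongly convex function -/
private lemma strongMono (f : E → ℝ) (G : E → E)
    (hG : ∀ p, HasGradientAt f (G p) p) {μ : ℝ}
    (hsc : StrongConvexOn Set.univ μ f) (x y : E) :
    μ * ‖x - y‖ ^ 2 ≤ ⟪G x - G y, x - y⟫ := by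
  set g : E → ℝ := fun w => f w - μ / 2 * ‖w‖ ^ 2 with hg
  have hgconv : ConvexOn ℝ Set.univ g := strongConvexOn_iff_convex.mp hsc
  set Gg : E → E := fun w => G w - μ • w with hGg
  have hGg' : ∀ p, HasGradientAt g (Gg p) p := by
    intro p
    have h1 : HasFDerivAt f (InnerProductSpace.toDual ℝ E (G p)) p := by
      have := hG p; rwa [hasGradientAt_iff_hasFDerivAt] at this
    have hsq : HasFDerivAt (fun w : E => ⟪w, w⟫)
        ((fderivInnerCLM ℝ (p, p)).comp ((ContinuousLinearMap.id ℝ E).prod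
          (ContinuousLinearMap.id ℝ E))) p :=
      (hasFDerivAt_id p).inner ℝ (hasFDerivAt_id p)
    have hsq' : HasFDerivAt (fun w : E => μ / 2 * ‖w‖ ^ 2)
        ((μ/2) • ((fderivInnerCLM ℝ (p, p)).comp ((ContinuousLinearMap.id ℝ E).prod
          (ContinuousLinearMap.id ℝ E)))) p := by
      have heq : (fun w : E => μ / 2 * ‖w‖ ^ 2) = fun w : E => μ / 2 * ⟪w, w⟫ := by
        funext w; rw [real_inner_self_eq_norm_sq]
      rw [heq]
      exact hsq.const_mul (μ/2)
    have h2 := h1.sub hsq'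
    rw [hasGradientAt_iff_hasFDerivAt]
    apply h2.congr_fderiv
    ext w
    simp [hGg, InnerProductSpace.toDual_apply_apply, fderivInnerCLM_apply, inner_sub_left,
      real_inner_smul_left, real_inner_comm p w]
    ring
  have c1 := convexLower g Gg hGg' hgconv x y
  have c2 := convexLower g Gg hGg' hgconv y x
  have hyx : y - x = -(x - y) := by abel
  rw [hyx, inner_neg_right] at c1
  have e1 : Gg x = G x - μ • x := rfl
  have e2 : Gg y = G y - μ • y := rfl
  rw [e1] at c1
  rw [e2] at c2
  have hin : ⟪G x - μ • x, x - y⟫ - ⟪G y - μ • y, x - y⟫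
      = ⟪G x - G y, x - y⟫ - μ * ‖x - y‖ ^ 2 := by
    rw [inner_sub_left, inner_sub_left, inner_sub_left, real_inner_smul_left,
      real_inner_smul_left]
    have hq : ⟪x, x - y⟫ - ⟪y, x - y⟫ = ‖x - y‖ ^ 2 := by
      rw [← inner_sub_left, real_inner_self_eq_norm_sq]
    linear_combination (-μ) * hq
  linarith [c1, c2, hin.le, hin.ge]

/-- one-step contraction of exact gradient descent between two points -/
private lemma contraction (f : E → ℝ) (G : E → E)
    (hG : ∀ p, HasGradientAt f (G p) p) {L μ : ℝ}
    (hμ : 0 < μ) (hμL : μ ≤ L)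
    (hsc : StrongConvexOn Set.univ μ f)
    (hlip : ∀ u v, ‖G u - G v‖ ≤ L * ‖u - v‖) (x y : E) :
    ‖(x - y) - (1 / L) • (G x - G y)‖ ≤ Real.sqrt (1 - μ / L) * ‖x - y‖ := by
  have hL : 0 < L := lt_of_lt_of_le hμ hμL
  have hconv : ConvexOn ℝ Set.univ f := by
    have := hsc.mono hμ.le
    exact strongConvexOn_zero.mp this
  have hco := cocoercive f G hG hconv hL hlip x y
  have hsm := strongMono f G hG hsc x y
  set a : E := x - y
  set d : E := G x - G y
  have hsq : ‖a - (1/L) • d‖ ^ 2 ≤ (1 - μ / L) * ‖a‖ ^ 2 := by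
    have hexp : ‖a - (1/L) • d‖ ^ 2
        = ‖a‖ ^ 2 - (2/L) * ⟪d, a⟫ + (1/L)^2 * ‖d‖ ^ 2 := by
      rw [norm_sub_sq_real, norm_smul, real_inner_smul_right, Real.norm_eq_abs,
        abs_of_pos (by positivity : (0:ℝ) < 1/L), mul_pow, real_inner_comm]
      ring
    have hco' : (1/L) * ‖d‖ ^ 2 ≤ ⟪d, a⟫ := by
      have : ⟪G x - G y, x - y⟫ = ⟪d, a⟫ := rfl
      linarith [hco]
    have hsm' : μ * ‖a‖ ^ 2 ≤ ⟪d, a⟫ := hsm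
    have key : - (2/L) * ⟪d, a⟫ ≤ - (μ/L) * ‖a‖ ^ 2 - (1/L)^2 * ‖d‖ ^ 2 := by
      have h1 : (1/L) * (μ * ‖a‖ ^ 2) ≤ (1/L) * ⟪d, a⟫ :=
        mul_le_mul_of_nonneg_left hsm' (by positivity)
      have h2 : (1/L) * ((1/L) * ‖d‖ ^ 2) ≤ (1/L) * ⟪d, a⟫ :=
        mul_le_mul_of_nonneg_left hco' (by positivity)
      have e1 : (1/L) * (μ * ‖a‖ ^ 2) = (μ/L) * ‖a‖ ^ 2 := by ring
      have e2 : (1/L) * ((1/L) * ‖d‖ ^ 2) = (1/L)^2 * ‖d‖ ^ 2 := by ring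
      have e3 : (2/L) * ⟪d, a⟫ = (1/L) * ⟪d, a⟫ + (1/L) * ⟪d, a⟫ := by ring
      linarith [h1, h2]
    have : ‖a‖ ^ 2 - (2/L) * ⟪d, a⟫ + (1/L)^2 * ‖d‖ ^ 2
        ≤ (1 - μ/L) * ‖a‖ ^ 2 := by nlinarith [key]
    linarith [hexp.le, this]
  have hr : (0:ℝ) ≤ 1 - μ / L := by
    have : μ / L ≤ 1 := (div_le_one hL).mpr hμL
    linarith
  calc ‖a - (1/L) • d‖ = Real.sqrt (‖a - (1/L) • d‖ ^ 2) := by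
        rw [Real.sqrt_sq (norm_nonneg _)]
    _ ≤ Real.sqrt ((1 - μ / L) * ‖a‖ ^ 2) := Real.sqrt_le_sqrt hsq
    _ = Real.sqrt (1 - μ / L) * ‖a‖ := by
        rw [Real.sqrt_mul hr, Real.sqrt_sq (norm_nonneg _)]

end Aux

/-- Two runs of inexact gradient descent on an `L`-smooth `μ`-strongly convex
function from the same initialization stay within `4δ/μ` of each other. -/
theorem inexact_gd_strongly_convex_deviation {n : ℕ}
    (f : EuclideanSpace ℝ (Fin n) → ℝ) (L μ δ : ℝ)
    (hμ : 0 < μ) (hL : μ ≤ L) (hδ : 0 ≤ δ)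
    (hdiff : Differentiable ℝ f)
    (hsc : StrongConvexOn Set.univ μ f)
    (hsmooth : ∀ x y, ‖gradient f x - gradient f y‖ ≤ L * ‖x - y‖)
    (x x' Δ Δ' : ℕ → EuclideanSpace ℝ (Fin n))
    (hx0 : x 0 = x' 0)
    (hΔ : ∀ t, ‖Δ t‖ ≤ δ) (hΔ' : ∀ t, ‖Δ' t‖ ≤ δ)
    (hx : ∀ t, x (t + 1) = x t - (1 / L) • (gradient f (x t) + Δ t))
    (hx' : ∀ t, x' (t + 1) = x' t - (1 / L) • (gradient f (x' t) + Δ' t)) :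
    ∀ t : ℕ, 1 ≤ t → ‖x t - x' t‖ ≤ 4 * δ / μ := by
  have hLpos : 0 < L := lt_of_lt_of_le hμ hL
  have hG : ∀ p, HasGradientAt f (gradient f p) p := fun p => (hdiff p).hasGradientAt
  have hρ : Real.sqrt (1 - μ / L) ≤ 1 - μ / (2 * L) := by
    have h2 : (0:ℝ) ≤ 1 - μ / (2 * L) := by
      have : μ / (2 * L) ≤ 1 := by
        rw [div_le_one (by positivity)]
        linarith
      linarith
    have h1 : 1 - μ / L ≤ (1 - μ / (2 * L)) ^ 2 := by
      have e : (1 - μ / (2 * L)) ^ 2 = 1 - μ / L + (μ / (2 * L)) ^ 2 := by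
        field_simp
        ring
      nlinarith [sq_nonneg (μ / (2 * L))]
    calc Real.sqrt (1 - μ / L) ≤ Real.sqrt ((1 - μ / (2 * L)) ^ 2) :=
          Real.sqrt_le_sqrt h1
      _ = 1 - μ / (2 * L) := Real.sqrt_sq h2
  suffices h : ∀ s : ℕ, ‖x s - x' s‖ ≤ 4 * δ / μ by
    intro t _
    exact h t
  intro s
  induction s with
  | zero =>
    rw [hx0]
    simp
    positivity
  | succ s ih =>
    have hstep : x (s+1) - x' (s+1)
        = ((x s - x' s) - (1/L) • (gradient f (x s) - gradient f (x' s)))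
          - (1/L) • (Δ s - Δ' s) := by
      rw [hx s, hx' s]
      simp only [smul_sub, smul_add]
      abel
    have h1 : ‖x (s+1) - x' (s+1)‖
        ≤ ‖(x s - x' s) - (1/L) • (gradient f (x s) - gradient f (x' s))‖
          + ‖(1/L) • (Δ s - Δ' s)‖ := by
      rw [hstep]; exact norm_sub_le _ _
    have h2 := contraction f (gradient f) hG hμ hL hsc hsmooth (x s) (x' s)
    have h3 : ‖(1/L) • (Δ s - Δ' s)‖ ≤ (1/L) * (2 * δ) := by
      rw [norm_smul, Real.norm_eq_abs, abs_of_pos (by positivity : (0:ℝ) < 1/L)]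
      have := norm_sub_le (Δ s) (Δ' s)
      have h4 : ‖Δ s - Δ' s‖ ≤ 2 * δ := by
        have := hΔ s
        have := hΔ' s
        linarith [norm_sub_le (Δ s) (Δ' s)]
      gcongr
    have h5 : Real.sqrt (1 - μ / L) * ‖x s - x' s‖
        ≤ (1 - μ / (2 * L)) * (4 * δ / μ) := by
      apply mul_le_mul hρ ih (norm_nonneg _)
      have : μ / (2 * L) ≤ 1 := by
        rw [div_le_one (by positivity)]
        linarith
      linarith
    have h6 : (1 - μ / (2 * L)) * (4 * δ / μ) + (1/L) * (2 * δ) = 4 * δ / μ := by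
      field_simp
      ring
    linarith [h1, le_trans h2 h5, h3]
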